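/- Let R be a principal ideal domain with a ring automorphism σ such that for every irreducible z ∈ R and every n ≥ 1, σ^n(z) is not an associate of z, and let p, q ∈ R be nonzero. Then there exists a nonzero (p,q)-invariant ideal J of R that is contained in every nonzero (p,q)-invariant ideal of R. -/

import Mathlib

set_option maxHeartbeats 1000000
set_option linter.unusedSectionVars false

open Finset UniqueFactorizationMonoid

section Aux

variable {R : Type*} [CommRing R] [IsDomain R]

private lemma assoc_map (e : R ≃+* R) {a b : R} (h : Associated a b) :
    Associated (e a) (e b) :=
  associated_of_dvd_dvd (map_dvd e h.dvd) (map_dvd e h.symm.dvd)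

private lemma prime_map (e : R ≃+* R) {z : R} (hz : Prime z) : Prime (e z) :=
  (MulEquiv.prime_iff e.toMulEquiv).mpr hz

private lemma inv_pow_apply (σ : R ≃+* R) (m : ℕ) (x : R) : (σ⁻¹ ^ m) ((σ ^ m) x) = x := by
  have h : (σ⁻¹ ^ m) * (σ ^ m) = 1 := by rw [inv_pow]; exact inv_mul_cancel _
  have h2 : ((σ⁻¹ ^ m) * (σ ^ m)) x = (σ⁻¹ ^ m) ((σ ^ m) x) := rfl
  rw [← h2, h]; rfl

private lemma pow_inv_apply (σ : R ≃+* R) (m : ℕ) (x : R) : (σ ^ m) ((σ⁻¹ ^ m) x) = x := by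
  have h : (σ ^ m) * (σ⁻¹ ^ m) = 1 := by rw [inv_pow]; exact mul_inv_cancel _
  have h2 : ((σ ^ m) * (σ⁻¹ ^ m)) x = (σ ^ m) ((σ⁻¹ ^ m) x) := rfl
  rw [← h2, h]; rfl

private lemma pow_add_apply (σ : R ≃+* R) (a b : ℕ) (x : R) :
    (σ ^ (a + b)) x = (σ ^ a) ((σ ^ b) x) := by
  rw [pow_add]; rfl

private lemma step_apply (σ : R ≃+* R) (x : R) (k : ℕ) : (σ ^ (k + 1)) x = σ ((σ ^ k) x) := by
  rw [pow_succ']; rfl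

private lemma apply_inv_apply (σ : R ≃+* R) (x : R) : σ (σ⁻¹ x) = x :=
  σ.apply_symm_apply x

/-- `PiP σ p N = ∏_{k=0}^{N} σ^{-k}(p)`. -/
private def PiP (σ : R ≃+* R) (p : R) (N : ℕ) : R :=
  ∏ k ∈ Finset.range (N + 1), (σ⁻¹ ^ k) p

private lemma PiP_zero (σ : R ≃+* R) (p : R) : PiP σ p 0 = p := by
  rw [PiP, Finset.prod_range_one, pow_zero]; rfl

private lemma PiP_succ (σ : R ≃+* R) (p : R) (N : ℕ) :
    PiP σ p (N + 1) = PiP σ p N * (σ⁻¹ ^ (N + 1)) p :=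
  Finset.prod_range_succ _ _

private lemma PiP_ne_zero (σ : R ≃+* R) {p : R} (hp : p ≠ 0) (N : ℕ) : PiP σ p N ≠ 0 := by
  rw [PiP, Finset.prod_ne_zero_iff]
  intro k _ h
  apply hp
  have := congrArg (⇑(σ ^ k)) h
  rwa [pow_inv_apply, map_zero] at this

private lemma PiP_dvd (σ : R ≃+* R) (p : R) {N M : ℕ} (h : N ≤ M) :
    PiP σ p N ∣ PiP σ p M := by
  induction M, h using Nat.le_induction with
  | base => exact dvd_rfl
  | succ M hM ih => exact ih.trans ⟨(σ⁻¹ ^ (M + 1)) p, PiP_succ σ p M⟩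

private lemma PiP_shift (σ : R ≃+* R) (p : R) (N : ℕ) :
    σ⁻¹ (PiP σ p N) * p = PiP σ p (N + 1) := by
  unfold PiP
  rw [map_prod]
  conv_rhs => rw [Finset.prod_range_succ']
  have h0 : (σ⁻¹ ^ 0) p = p := by rw [pow_zero]; rfl
  rw [h0]
  exact congrArg (fun t => t * p)
    (Finset.prod_congr rfl fun k _ => (step_apply σ⁻¹ p k).symm)

private lemma PiP_shift' (σ : R ≃+* R) (p : R) (N : ℕ) :
    σ (PiP σ p (N + 1)) = σ p * PiP σ p N := by
  unfold PiP
  rw [map_prod]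
  conv_lhs => rw [Finset.prod_range_succ']
  have h0 : σ ((σ⁻¹ ^ 0) p) = σ p := by rw [pow_zero]; rfl
  rw [h0, mul_comm]
  exact congrArg (fun t => σ p * t)
    (Finset.prod_congr rfl fun k _ => by rw [step_apply σ⁻¹ p k, apply_inv_apply])

end Aux

/-- An ideal `I` of `R` is `(p,q)`-invariant if `σ⁻¹(i)·p ∈ I` and `σ(i)·q ∈ I`
for every `i ∈ I`. -/
def PQInvariant {R : Type*} [CommRing R] (σ : R ≃+* R) (p q : R) (I : Ideal R) : Prop :=
  ∀ i ∈ I, σ⁻¹ i * p ∈ I ∧ σ i * q ∈ I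

section Main

variable {R : Type*} [CommRing R] [IsDomain R] [IsPrincipalIdealRing R]

/-- The basic chain of elements of an invariant ideal. -/
private lemma chain_mem (σ : R ≃+* R) (p q : R) (I : Ideal R)
    (hI : PQInvariant σ p q I) {d : R} (hd : d ∈ I) (N : ℕ) :
    (σ⁻¹ ^ (N + 1)) d * PiP σ p N ∈ I ∧ (σ ^ (N + 1)) d * PiP σ⁻¹ q N ∈ I := by
  induction N with
  | zero =>
    constructor
    · rw [pow_one, PiP_zero]; exact (hI d hd).1
    · rw [pow_one, PiP_zero]; exact (hI d hd).2
  | succ N ih =>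
    constructor
    · have h := (hI _ ih.1).1
      rwa [map_mul, mul_assoc, PiP_shift, ← step_apply σ⁻¹ d (N + 1)] at h
    · have h := (hI _ ih.2).2
      have hσ : σ (PiP σ⁻¹ q N) * q = PiP σ⁻¹ q (N + 1) := by
        have := PiP_shift σ⁻¹ q N
        rwa [inv_inv] at this
      rwa [map_mul, mul_assoc, hσ, ← step_apply σ d (N + 1)] at h

/-- Finiteness of the set of shifts `m` for which `x` and `σ^m(y)` share a prime factor. -/
private lemma finB (σ : R ≃+* R)
    (horb : ∀ z : R, Irreducible z → ∀ n : ℕ, 1 ≤ n → ¬ Associated ((σ ^ n) z) z)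
    {x y : R} (hx : x ≠ 0) (hy : y ≠ 0) :
    {m : ℕ | ∃ z, Prime z ∧ z ∣ x ∧ z ∣ (σ ^ m) y}.Finite := by
  classical
  have key : ∀ a ∈ factors x, ∀ b ∈ factors y,
      {m : ℕ | Associated ((σ ^ m) b) a}.Finite := by
    intro a _ b hb
    apply Set.Subsingleton.finite
    intro m hm m' hm'
    have core : ∀ m k : ℕ, Associated ((σ ^ (m + (k + 1))) b) a →
        Associated ((σ ^ m) b) a → False := by
      intro m k h1 h2
      have h3 : Associated ((σ ^ (m + (k + 1))) b) ((σ ^ m) b) := h1.trans h2.symm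
      have h4 := assoc_map (σ⁻¹ ^ m) h3
      rw [pow_add_apply, inv_pow_apply, inv_pow_apply] at h4
      exact horb b (prime_of_factor b hb).irreducible (k + 1) (Nat.le_add_left 1 k) h4
    rcases lt_trichotomy m m' with h | h | h
    · obtain ⟨k, rfl⟩ : ∃ k, m' = m + (k + 1) := ⟨m' - m - 1, by omega⟩
      exact absurd hm' (fun hh => core m k hh hm)
    · exact h
    · obtain ⟨k, rfl⟩ : ∃ k, m = m' + (k + 1) := ⟨m - m' - 1, by omega⟩
      exact absurd hm (fun hh => core m' k hh hm')
  have hsub : {m : ℕ | ∃ z, Prime z ∧ z ∣ x ∧ z ∣ (σ ^ m) y} ⊆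
      ⋃ a ∈ (factors x).toFinset, ⋃ b ∈ (factors y).toFinset,
        {m : ℕ | Associated ((σ ^ m) b) a} := by
    rintro m ⟨z, hz, hzx, hzy⟩
    obtain ⟨a, ha, haz⟩ := exists_mem_factors_of_dvd hx hz.irreducible hzx
    have hz'y : (σ⁻¹ ^ m) z ∣ y := by
      have := map_dvd (σ⁻¹ ^ m) hzy
      rwa [inv_pow_apply] at this
    obtain ⟨b, hb, hbz⟩ := exists_mem_factors_of_dvd hy
      (prime_map (σ⁻¹ ^ m) hz).irreducible hz'y
    simp only [Set.mem_iUnion, Multiset.mem_toFinset, Finset.mem_coe, Set.mem_setOf_eq]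
    refine ⟨a, ha, b, hb, ?_⟩
    have := assoc_map (σ ^ m) hbz.symm
    rw [pow_inv_apply] at this
    exact this.trans haz
  exact Set.Finite.subset
    (Set.Finite.biUnion (Multiset.toFinset (factors x)).finite_toSet fun a ha =>
      Set.Finite.biUnion (Multiset.toFinset (factors y)).finite_toSet fun b hb =>
        key a (Multiset.mem_toFinset.mp ha) b (Multiset.mem_toFinset.mp hb)) hsub

/-- The decreasing chain of ideals `G N = (π_N) + (κ_N)`. -/
private def GI (σ : R ≃+* R) (p q : R) (N : ℕ) : Ideal R :=
  Ideal.span {PiP σ p N} ⊔ Ideal.span {PiP σ⁻¹ q N}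

private lemma GI_succ_le (σ : R ≃+* R) (p q : R) (N : ℕ) :
    GI σ p q (N + 1) ≤ GI σ p q N :=
  sup_le
    (le_trans (Ideal.span_singleton_le_span_singleton.mpr (PiP_dvd σ p (Nat.le_succ N)))
      le_sup_left)
    (le_trans (Ideal.span_singleton_le_span_singleton.mpr (PiP_dvd σ⁻¹ q (Nat.le_succ N)))
      le_sup_right)

private lemma PiP_mem_GI (σ : R ≃+* R) (p q : R) (N : ℕ) : PiP σ p N ∈ GI σ p q N :=
  Ideal.mem_sup_left (Ideal.subset_span rfl)

private lemma KaQ_mem_GI (σ : R ≃+* R) (p q : R) (N : ℕ) : PiP σ⁻¹ q N ∈ GI σ p q N :=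
  Ideal.mem_sup_right (Ideal.subset_span rfl)

/-- Stabilization of the chain of ideals. -/
private lemma GI_stab (σ : R ≃+* R) {p q : R} (hp : p ≠ 0) (N : ℕ)
    (hN : ∀ m, N + 1 ≤ m → ∀ z : R, Prime z → z ∣ p → ¬ z ∣ (σ ^ m) q) :
    GI σ p q N = GI σ p q (N + 1) := by
  refine le_antisymm ?_ (GI_succ_le σ p q N)
  set I := GI σ p q (N + 1) with hIdef
  have hprin : I.IsPrincipal := IsPrincipalIdealRing.principal I
  set g := Submodule.IsPrincipal.generator I with hg
  have hmem : ∀ x : R, x ∈ I ↔ g ∣ x := fun x => Submodule.IsPrincipal.mem_iff_generator_dvd I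
  have hgπ : g ∣ PiP σ p (N + 1) := (hmem _).mp (PiP_mem_GI σ p q (N + 1))
  have hgκ : g ∣ PiP σ⁻¹ q (N + 1) := (hmem _).mp (KaQ_mem_GI σ p q (N + 1))
  have hg0 : g ≠ 0 := by
    intro h0
    exact PiP_ne_zero σ hp (N + 1) (zero_dvd_iff.mp (h0 ▸ hgπ))
  -- κ as a product of σ-powers of q
  have hκ : PiP σ⁻¹ q (N + 1) = ∏ k ∈ Finset.range (N + 2), (σ ^ k) q := by
    simp [PiP, inv_inv]
  have cop1 : IsCoprime g ((σ⁻¹ ^ (N + 1)) p) := by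
    apply isCoprime_of_prime_dvd (fun h => hg0 h.1)
    intro z hz hzg hzp
    have hzκ : z ∣ ∏ k ∈ Finset.range (N + 2), (σ ^ k) q := hκ ▸ (hzg.trans hgκ)
    obtain ⟨j, _, hj⟩ := hz.exists_mem_finset_dvd hzκ
    have hw : (σ ^ (N + 1)) z ∣ p := by
      have := map_dvd (σ ^ (N + 1)) hzp
      rwa [pow_inv_apply] at this
    have hw2 : (σ ^ (N + 1)) z ∣ (σ ^ (N + 1 + j)) q := by
      have := map_dvd (σ ^ (N + 1)) hj
      rwa [← pow_add_apply] at this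
    exact hN (N + 1 + j) (Nat.le_add_right _ _) _ (prime_map (σ ^ (N + 1)) hz) hw hw2
  have cop2 : IsCoprime g (((σ⁻¹)⁻¹ ^ (N + 1)) q) := by
    apply isCoprime_of_prime_dvd (fun h => hg0 h.1)
    intro z hz hzg hzq
    have hzq' : z ∣ (σ ^ (N + 1)) q := by rwa [inv_inv] at hzq
    have hzπ : z ∣ ∏ k ∈ Finset.range (N + 2), (σ⁻¹ ^ k) p := hzg.trans hgπ
    obtain ⟨i, _, hi⟩ := hz.exists_mem_finset_dvd hzπ
    have hw : (σ ^ i) z ∣ p := by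
      have := map_dvd (σ ^ i) hi
      rwa [pow_inv_apply] at this
    have hw2 : (σ ^ i) z ∣ (σ ^ (i + (N + 1))) q := by
      have := map_dvd (σ ^ i) hzq'
      rwa [← pow_add_apply] at this
    exact hN (i + (N + 1)) (Nat.le_add_left _ _) _ (prime_map (σ ^ i) hz) hw hw2
  have hπN : PiP σ p N ∈ I := by
    rw [hmem]
    exact cop1.dvd_of_dvd_mul_right (PiP_succ σ p N ▸ hgπ)
  have hκN : PiP σ⁻¹ q N ∈ I := by
    rw [hmem]
    exact cop2.dvd_of_dvd_mul_right (PiP_succ σ⁻¹ q N ▸ hgκ)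
  exact sup_le ((Ideal.span_singleton_le_iff_mem _).mpr hπN)
    ((Ideal.span_singleton_le_iff_mem _).mpr hκN)

end Main

/-- Over a PID with all `σ`-orbits of irreducibles infinite, the
rank-one `R`-free module `V_p` has a unique simple submodule (its socle): there is a
nonzero `(p,q)`-invariant ideal contained in every nonzero `(p,q)`-invariant ideal. -/
theorem stmt_10 {R : Type*} [CommRing R] [IsDomain R] [IsPrincipalIdealRing R]
    (σ : R ≃+* R)
    (horb : ∀ z : R, Irreducible z → ∀ n : ℕ, 1 ≤ n → ¬ Associated ((σ ^ n) z) z)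
    (p q : R) (hp : p ≠ 0) (hq : q ≠ 0) :
    ∃ J : Ideal R, J ≠ ⊥ ∧ PQInvariant σ p q J ∧
      ∀ I : Ideal R, PQInvariant σ p q I → I ≠ ⊥ → J ≤ I := by
  classical
  -- choose the stabilization threshold
  obtain ⟨M, hM⟩ := (finB σ horb hp hq).bddAbove
  set N₀ := M + 1 with hN₀def
  have hN₀ : ∀ m, N₀ ≤ m → ∀ z : R, Prime z → z ∣ p → ¬ z ∣ (σ ^ m) q := by
    intro m hm z hz h1 h2
    have : m ≤ M := hM ⟨z, hz, h1, h2⟩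
    omega
  have stab_all : ∀ N, N₀ ≤ N → GI σ p q N = GI σ p q N₀ := by
    intro N hN
    induction N, hN using Nat.le_induction with
    | base => rfl
    | succ N hN ih =>
      rw [← GI_stab σ hp N (fun m hm => hN₀ m (by omega))]
      exact ih
  refine ⟨GI σ p q N₀, ?_, ?_, ?_⟩
  · -- nonzero
    rw [Submodule.ne_bot_iff]
    exact ⟨PiP σ p N₀, PiP_mem_GI σ p q N₀, PiP_ne_zero σ hp N₀⟩
  · -- invariance
    intro i hi
    have hi' : i ∈ GI σ p q (N₀ + 1) := by
      rw [stab_all (N₀ + 1) (Nat.le_succ N₀)]; exact hi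
    obtain ⟨x, hx, y, hy, rfl⟩ := Submodule.mem_sup.mp hi'
    obtain ⟨a, rfl⟩ := Ideal.mem_span_singleton'.mp hx
    obtain ⟨b, rfl⟩ := Ideal.mem_span_singleton'.mp hy
    constructor
    · -- σ⁻¹(i)·p ∈ J
      rw [map_add, add_mul]
      apply Ideal.add_mem
      · apply Ideal.mem_sup_left
        rw [map_mul, mul_assoc, PiP_shift]
        exact Ideal.mem_span_singleton.mpr
          (Dvd.dvd.mul_left (PiP_dvd σ p (by omega)) _)
      · apply Ideal.mem_sup_right
        rw [map_mul, mul_assoc]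
        have hshift : σ⁻¹ (PiP σ⁻¹ q (N₀ + 1)) = σ⁻¹ q * PiP σ⁻¹ q N₀ :=
          PiP_shift' σ⁻¹ q N₀
        rw [hshift]
        exact Ideal.mem_span_singleton.mpr
          ⟨σ⁻¹ b * (σ⁻¹ q * p), by ring⟩
    · -- σ(i)·q ∈ J
      rw [map_add, add_mul]
      apply Ideal.add_mem
      · apply Ideal.mem_sup_left
        rw [map_mul, mul_assoc]
        rw [PiP_shift' σ p N₀]
        exact Ideal.mem_span_singleton.mpr ⟨σ a * (σ p * q), by ring⟩
      · apply Ideal.mem_sup_right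
        rw [map_mul, mul_assoc]
        have hshift : σ (PiP σ⁻¹ q (N₀ + 1)) * q = PiP σ⁻¹ q (N₀ + 2) := by
          have := PiP_shift σ⁻¹ q (N₀ + 1)
          rwa [inv_inv] at this
        rw [hshift]
        exact Ideal.mem_span_singleton.mpr
          (Dvd.dvd.mul_left (PiP_dvd σ⁻¹ q (by omega)) _)
  · -- minimality
    intro I hI hIne
    have hprin : I.IsPrincipal := IsPrincipalIdealRing.principal I
    set d := Submodule.IsPrincipal.generator I with hd
    have hmem : ∀ x : R, x ∈ I ↔ d ∣ x := fun x => Submodule.IsPrincipal.mem_iff_generator_dvd I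
    have hdI : d ∈ I := Submodule.IsPrincipal.generator_mem I
    have hd0 : d ≠ 0 := by
      intro h0
      apply hIne
      rw [eq_bot_iff]
      intro x hx
      have := (hmem x).mp hx
      rw [h0, zero_dvd_iff] at this
      simp [this]
    obtain ⟨M₁, hM₁⟩ := (finB σ horb hd0 hd0).bddAbove
    set N := max N₀ (M₁ + 1) with hNdef
    have hNd : ∀ z : R, Prime z → z ∣ d → ¬ z ∣ (σ ^ (N + 1)) d := by
      intro z hz h1 h2
      have : N + 1 ≤ M₁ := hM₁ ⟨z, hz, h1, h2⟩
      omega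
    obtain ⟨h1, h2⟩ := chain_mem σ p q I hI hdI N
    have hdvd1 : d ∣ (σ⁻¹ ^ (N + 1)) d * PiP σ p N := (hmem _).mp h1
    have hdvd2 : d ∣ (σ ^ (N + 1)) d * PiP σ⁻¹ q N := (hmem _).mp h2
    have cop1 : IsCoprime d ((σ⁻¹ ^ (N + 1)) d) := by
      apply isCoprime_of_prime_dvd (fun h => hd0 h.1)
      intro z hz hz1 hz2
      apply hNd ((σ ^ (N + 1)) z) (prime_map (σ ^ (N + 1)) hz)
      · have := map_dvd (σ ^ (N + 1)) hz2
        rwa [pow_inv_apply] at this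
      · exact map_dvd (σ ^ (N + 1)) hz1
    have cop2 : IsCoprime d ((σ ^ (N + 1)) d) := by
      apply isCoprime_of_prime_dvd (fun h => hd0 h.1)
      intro z hz hz1 hz2
      exact hNd z hz hz1 hz2
    have hπ : PiP σ p N ∈ I := (hmem _).mpr (cop1.dvd_of_dvd_mul_left hdvd1)
    have hκ : PiP σ⁻¹ q N ∈ I := (hmem _).mpr (cop2.dvd_of_dvd_mul_left hdvd2)
    have : GI σ p q N ≤ I :=
      sup_le ((Ideal.span_singleton_le_iff_mem _).mpr hπ) ((Ideal.span_singleton_le_iff_mem _).mpr hκ)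
    rw [← stab_all N (le_max_left _ _)]
    exact this
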